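/- Every β-acyclic CNF formula admits a weakly simplicial elimination ordering of its variables, i.e., its hypergraph can be reduced to the empty hypergraph by repeatedly deleting weakly simplicial vertices. -/

import Mathlib

open Finset

def negLit {V : Type} (l : V × Bool) : V × Bool := (l.1, !l.2)

abbrev Clause (V : Type) := Finset (V × Bool)
abbrev CNF (V : Type) := Finset (Finset (V × Bool))

variable {V : Type} [DecidableEq V]

def clauseVars (C : Clause V) : Finset V := C.image Prod.fst

def fvars (F : CNF V) : Finset V := F.sup clauseVars

def varOccurs (x : V) (C : Clause V) : Prop := (x, true) ∈ C ∨ (x, false) ∈ C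

def NonTaut (C : Clause V) : Prop := ∀ l ∈ C, negLit l ∉ C

def satClause (τ : V → Bool) (C : Clause V) : Prop := ∃ l ∈ C, τ l.1 = l.2

def satCNF (τ : V → Bool) (F : CNF V) : Prop := ∀ C ∈ F, satClause τ C

def Satisfiable (F : CNF V) : Prop := ∃ τ, satCNF τ F

/-- `R` is the `x`-resolvent of `C` and `D` (with `x` occurring positively in `C`). -/
def IsResolventOn (x : V) (C D R : Clause V) : Prop :=
  C ∩ D.image negLit = {(x, true)} ∧
    R = (C ∪ D) \ ({(x, true), (x, false)} : Clause V)

/-- Davis-Putnam elimination of variable `x`: add all `x`-resolvents and remove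
all clauses in which `x` occurs. -/
def DP (x : V) (F : CNF V) : CNF V :=
  (((F ×ˢ F).filter fun p => p.1 ∩ p.2.image negLit = {(x, true)}).image
      fun p => (p.1 ∪ p.2) \ ({(x, true), (x, false)} : Clause V)) ∪
    F.filter fun C => (x, true) ∉ C ∧ (x, false) ∉ C

def DPSeq : List V → CNF V → CNF V
  | [], F => F
  | x :: xs, F => DPSeq xs (DP x F)

def DPSimplicial (x : V) (F : CNF V) : Prop :=
  ∀ C ∈ F, ∀ D ∈ F, ∀ R : Clause V, IsResolventOn x C D R → R ⊆ C ∨ R ⊆ D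

def WeaklySimplicialVar (x : V) (F : CNF V) : Prop :=
  ∀ C ∈ F, ∀ D ∈ F, varOccurs x C → varOccurs x D →
    clauseVars C ⊆ clauseVars D ∨ clauseVars D ⊆ clauseVars C

def IsDPSElim : List V → CNF V → Prop
  | [], _ => True
  | x :: xs, F => DPSimplicial x F ∧ IsDPSElim xs (DP x F)

def IsWSElim : List V → CNF V → Prop
  | [], _ => True
  | x :: xs, F => WeaklySimplicialVar x F ∧ IsWSElim xs (DP x F)

def HasDPSElimOrdering (F : CNF V) : Prop :=
  ∃ l : List V, l.toFinset = fvars F ∧ IsDPSElim l F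

def HasWSElimOrdering (F : CNF V) : Prop :=
  ∃ l : List V, l.toFinset = fvars F ∧ IsWSElim l F

/-- `F − B`: remove all literals over variables in `B` from all clauses. -/
def minusVars (F : CNF V) (B : Finset V) : CNF V :=
  F.image fun C => C.filter fun l => l.1 ∉ B

/-- `F[τ]` for the partial assignment given by restricting `τ` to `B`:
remove satisfied clauses and delete falsified literals. -/
def reduct (F : CNF V) (B : Finset V) (τ : V → Bool) : CNF V :=
  (F.filter fun C => ∀ l ∈ C, l.1 ∈ B → τ l.1 ≠ l.2).image
    fun C => C.filter fun l => l.1 ∉ B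

/-- α-acyclicity via the reduction rules: remove a hyperedge that is empty or
contained in another hyperedge; remove a vertex occurring in at most one hyperedge. -/
inductive AlphaAcyclic {V : Type} [DecidableEq V] : Finset (Finset V) → Prop
  | empty : AlphaAcyclic (∅ : Finset (Finset V))
  | removeEdge (H : Finset (Finset V)) (e : Finset V) (he : e ∈ H)
      (hcov : e = ∅ ∨ ∃ f ∈ H, f ≠ e ∧ e ⊆ f)
      (h : AlphaAcyclic (H.erase e)) : AlphaAcyclic H
  | removeVertex (H : Finset (Finset V)) (v : V)
      (hv : (H.filter fun e => v ∈ e).card ≤ 1)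
      (h : AlphaAcyclic (H.image fun e => e.erase v)) : AlphaAcyclic H

/-- A hypergraph (given by its finite family of hyperedges) is β-acyclic if
every partial hypergraph is α-acyclic. -/
def BetaAcyclic {V : Type} [DecidableEq V] (H : Finset (Finset V)) : Prop :=
  ∀ H' ⊆ H, AlphaAcyclic H'

def hypergraphOf {V : Type} [DecidableEq V] (F : CNF V) : Finset (Finset V) :=
  F.image clauseVars

/-- A vertex of a hypergraph is weakly simplicial if the hyperedges containing it
form a chain under inclusion (its neighbourhood in the bipartite incidence graph
is automatically independent). -/
def wsVertex {V : Type} [DecidableEq V] (v : V) (H : Finset (Finset V)) : Prop :=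
  ∀ e ∈ H, ∀ f ∈ H, v ∈ e → v ∈ f → e ⊆ f ∨ f ⊆ e

/-- The hypergraph can be reduced to the empty hypergraph by repeatedly deleting
weakly simplicial vertices. -/
inductive WSReducible {V : Type} [DecidableEq V] : Finset (Finset V) → Prop
  | base (H : Finset (Finset V)) (h : ∀ e ∈ H, e = ∅) : WSReducible H
  | step (H : Finset (Finset V)) (v : V) (hv : v ∈ H.sup id) (hws : wsVertex v H)
      (h : WSReducible (H.image fun e => e.erase v)) : WSReducible H

/-- The incidence graph of a hypergraph: bipartite graph on vertices and hyperedges. -/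
def incidenceGraph {V : Type} [DecidableEq V] (H : Finset (Finset V)) :
    SimpleGraph (V ⊕ Finset V) where
  Adj a b := ∃ v e, e ∈ H ∧ v ∈ e ∧
    ((a = Sum.inl v ∧ b = Sum.inr e) ∨ (a = Sum.inr e ∧ b = Sum.inl v))
  symm := by
    constructor
    rintro a b ⟨v, e, he, hv, h | h⟩
    · exact ⟨v, e, he, hv, Or.inr ⟨h.2, h.1⟩⟩
    · exact ⟨v, e, he, hv, Or.inl ⟨h.2, h.1⟩⟩
  loopless := by
    constructor
    rintro a ⟨v, e, he, hv, ⟨h1, h2⟩ | ⟨h1, h2⟩⟩ <;> subst h1 <;> simp_all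

/-- `G` has an induced cycle on `n` vertices. -/
def HasInducedCycleOn {α : Type} (G : SimpleGraph α) (n : ℕ) : Prop :=
  ∃ f : ZMod n → α, Function.Injective f ∧
    ∀ i j : ZMod n, G.Adj (f i) (f j) ↔ (j = i + 1 ∨ i = j + 1)

/-- No induced cycle on 6 or more vertices. -/
def NoLongInducedCycle {α : Type} (G : SimpleGraph α) : Prop :=
  ∀ n : ℕ, 6 ≤ n → ¬ HasInducedCycleOn G n



section Cert
variable {V : Type} [DecidableEq V]

/-- A certificate of cyclicity: a set `X` of vertices and a set `G ⊆ H` of edges forming a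
2-regular incidence structure with distinct vertex-pairs. -/
def CycCert (H : Finset (Finset V)) (X : Finset V) (G : Finset (Finset V)) : Prop :=
  G ⊆ H ∧ G.Nonempty ∧ (∀ x ∈ X, (G.filter fun g => x ∈ g).card = 2) ∧
    (∀ g ∈ G, (X ∩ g).card = 2) ∧
    (∀ g ∈ G, ∀ g' ∈ G, g ≠ g' → X ∩ g ≠ X ∩ g')

def CycleFree (H : Finset (Finset V)) : Prop := ∀ X G, ¬ CycCert H X G

lemma alpha_no_cert {K : Finset (Finset V)} (h : AlphaAcyclic K) :
    ∀ X, ¬ CycCert K X K := by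
  induction h with
  | empty =>
    rintro X ⟨-, ⟨g, hg⟩, -⟩
    exact absurd hg (notMem_empty g)
  | removeEdge K e he hcov h ih =>
    rintro X ⟨-, -, hc1, hc2, hc3⟩
    rcases hcov with rfl | ⟨f, hf, hfe, hef⟩
    · have := hc2 _ he
      simp at this
    · have h1 : X ∩ e ⊆ X ∩ f := inter_subset_inter (Finset.Subset.refl X) hef
      have h2 : X ∩ e = X ∩ f := by
        apply eq_of_subset_of_card_le h1
        rw [hc2 _ he, hc2 _ hf]
      exact hc3 _ he _ hf (Ne.symm hfe) h2
  | removeVertex K v hv h ih =>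
    rintro X ⟨-, hne, hc1, hc2, hc3⟩
    -- v is not in X
    have hvX : v ∉ X := by
      intro hvX
      have h2 := hc1 v hvX
      omega
    -- intersections with X are unchanged by erasing v
    have hXint : ∀ g : Finset V, X ∩ g.erase v = X ∩ g := by
      intro g
      ext x
      simp only [mem_inter, mem_erase]
      constructor
      · rintro ⟨hx, -, hg⟩; exact ⟨hx, hg⟩
      · rintro ⟨hx, hg⟩; exact ⟨hx, fun hxv => hvX (hxv ▸ hx), hg⟩
    -- erasing v is injective on K
    have hinj : ∀ g ∈ K, ∀ g' ∈ K, g.erase v = g'.erase v → g = g' := by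
      intro g hg g' hg' hee
      by_contra hne'
      apply hc3 _ hg _ hg' hne'
      rw [← hXint g, ← hXint g', hee]
    refine ih X ⟨Finset.Subset.refl _, hne.image _, ?_, ?_, ?_⟩
    · intro x hx
      have : (K.image fun e => e.erase v).filter (fun g => x ∈ g)
          = (K.filter fun g => x ∈ g).image (fun e => e.erase v) := by
        ext g
        simp only [mem_filter, mem_image]
        constructor
        · rintro ⟨⟨e, heK, rfl⟩, hxg⟩
          exact ⟨e, ⟨heK, mem_of_mem_erase hxg⟩, rfl⟩
        · rintro ⟨e, ⟨heK, hxe⟩, rfl⟩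
          have hxv : x ≠ v := by
            rintro rfl
            have h2 := hc1 x hx
            have := hc1 x hx
            -- x = v ∈ X contradicts hvX
            exact absurd hx hvX
          exact ⟨⟨e, heK, rfl⟩, mem_erase.2 ⟨hxv, hxe⟩⟩
      rw [this]
      rw [Finset.card_image_of_injOn, hc1 x hx]
      intro g hg g' hg' hee
      exact hinj g (mem_filter.1 hg).1 g' (mem_filter.1 hg').1 hee
    · rintro g' hg'
      obtain ⟨g, hg, rfl⟩ := mem_image.1 hg'
      rw [hXint]; exact hc2 g hg
    · rintro g1' hg1' g2' hg2' hne'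
      obtain ⟨g1, hg1, rfl⟩ := mem_image.1 hg1'
      obtain ⟨g2, hg2, rfl⟩ := mem_image.1 hg2'
      rw [hXint, hXint]
      intro hXeq
      exact hc3 _ hg1 _ hg2 (fun hh => hne' (hh ▸ rfl)) hXeq

lemma betaAcyclic_cycleFree {H : Finset (Finset V)} (h : BetaAcyclic H) : CycleFree H := by
  rintro X G hc
  obtain ⟨hGH, hne, hc1, hc2, hc3⟩ := hc
  exact alpha_no_cert (h G hGH) X ⟨Finset.Subset.refl _, hne, hc1, hc2, hc3⟩

lemma cycleFree_erase {H : Finset (Finset V)} (h : CycleFree H) (u : V) :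
    CycleFree (H.image fun e => e.erase u) := by
  rintro X G ⟨hGH, hne, hc1, hc2, hc3⟩
  -- choose preimages
  have hpre : ∀ g' ∈ G, ∃ g ∈ H, g.erase u = g' := by
    intro g' hg'
    obtain ⟨g, hg, hgg⟩ := mem_image.1 (hGH hg')
    exact ⟨g, hg, hgg⟩
  classical
  choose pre hpreH hpreE using hpre
  -- u ∉ X
  have huX : u ∉ X := by
    intro huX
    have h1 := hc1 u huX
    have h2 : (G.filter fun g => u ∈ g).card = 0 := by
      rw [card_eq_zero, filter_eq_empty_iff]
      intro g hg
      obtain ⟨e, -, rfl⟩ := mem_image.1 (hGH hg)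
      exact notMem_erase u e
    omega
  have hXint : ∀ (g' : Finset V) (hg' : g' ∈ G), X ∩ pre g' hg' = X ∩ g' := by
    intro g' hg'
    ext x
    simp only [mem_inter]
    constructor
    · rintro ⟨hx, hg⟩
      refine ⟨hx, ?_⟩
      rw [← hpreE g' hg']
      exact mem_erase.2 ⟨fun hxu => huX (hxu ▸ hx), hg⟩
    · rintro ⟨hx, hg⟩
      have hxx : x ∈ (pre g' hg').erase u := by rw [hpreE g' hg']; exact hg
      exact ⟨hx, mem_of_mem_erase hxx⟩
  set G' : Finset (Finset V) := G.attach.image (fun g => pre g.1 g.2) with hG'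
  have hmemG' : ∀ g' (hg' : g' ∈ G), pre g' hg' ∈ G' := by
    intro g' hg'
    exact mem_image.2 ⟨⟨g', hg'⟩, mem_attach _ _, rfl⟩
  apply h X G'
  refine ⟨?_, ?_, ?_, ?_, ?_⟩
  · intro g hg
    obtain ⟨⟨g', hg'⟩, -, rfl⟩ := mem_image.1 hg
    exact hpreH _ _
  · obtain ⟨g', hg'⟩ := hne
    exact ⟨_, hmemG' g' hg'⟩
  · intro x hx
    have hxu : x ≠ u := fun hxu => huX (hxu ▸ hx)
    have : G'.filter (fun g => x ∈ g) = (G.filter fun g => x ∈ g).attach.image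
        (fun g => pre g.1 (mem_filter.1 g.2).1) := by
      ext g
      simp only [mem_filter, mem_image, hG']
      constructor
      · rintro ⟨⟨⟨g', hg'⟩, -, rfl⟩, hxg⟩
        refine ⟨⟨g', mem_filter.2 ⟨hg', ?_⟩⟩, mem_attach _ _, rfl⟩
        rw [← hpreE g' hg']
        exact mem_erase.2 ⟨hxu, hxg⟩
      · rintro ⟨⟨g', hg'⟩, -, rfl⟩
        have hg'G := (mem_filter.1 hg').1
        refine ⟨⟨⟨g', hg'G⟩, mem_attach _ _, rfl⟩, ?_⟩
        have := (mem_filter.1 hg').2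
        have hxx : x ∈ (pre g' hg'G).erase u := by rw [hpreE g' hg'G]; exact this
        exact mem_of_mem_erase hxx
    rw [this, Finset.card_image_of_injOn, Finset.card_attach, hc1 x hx]
    rintro ⟨g1, hg1⟩ - ⟨g2, hg2⟩ - he
    simp only at he
    have : g1 = g2 := by
      have e1 := hpreE g1 (mem_filter.1 hg1).1
      have e2 := hpreE g2 (mem_filter.1 hg2).1
      rw [← e1, ← e2, he]
    exact Subtype.ext this
  · intro g hg
    obtain ⟨⟨g', hg'⟩, -, rfl⟩ := mem_image.1 hg
    rw [hXint g' hg']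
    exact hc2 g' hg'
  · intro g1 hg1 g2 hg2 hne12
    obtain ⟨⟨g1', hg1'⟩, -, rfl⟩ := mem_image.1 hg1
    obtain ⟨⟨g2', hg2'⟩, -, rfl⟩ := mem_image.1 hg2
    simp only
    rw [hXint g1' hg1', hXint g2' hg2']
    apply hc3 _ hg1' _ hg2'
    intro hcon
    apply hne12
    subst hcon
    rfl

end Cert
section Weights
variable {V : Type} [DecidableEq V]

lemma sum_range_two_pow (N : ℕ) : ∑ x ∈ Finset.range N, 2^x = 2^N - 1 := by
  induction N with
  | zero => simp
  | succ n ih =>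
    rw [Finset.sum_range_succ, ih]
    have : 1 ≤ 2^n := Nat.one_le_two_pow
    omega

lemma sum_two_pow_lt {α : Type*} [DecidableEq α] (w : α → ℕ) (S : Finset α) (N : ℕ)
    (h : ∀ a ∈ S, w a < N) (hinj : Set.InjOn w S) :
    ∑ a ∈ S, 2^(w a) < 2^N := by
  have h1 : ∑ a ∈ S, 2^(w a) = ∑ x ∈ S.image w, 2^x := (Finset.sum_image (fun a ha b hb => hinj ha hb)).symm
  have h2 : S.image w ⊆ Finset.range N := by
    intro x hx
    obtain ⟨a, ha, rfl⟩ := Finset.mem_image.1 hx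
    exact Finset.mem_range.2 (h a ha)
  calc ∑ a ∈ S, 2^(w a) = ∑ x ∈ S.image w, 2^x := h1
    _ ≤ ∑ x ∈ Finset.range N, 2^x := Finset.sum_le_sum_of_subset h2
    _ = 2^N - 1 := sum_range_two_pow N
    _ < 2^N := by have : 1 ≤ 2^N := Nat.one_le_two_pow; omega

/-- If `M ∈ T \ S` dominates the symmetric difference of `S` and `T`, then the binary
weight of `S` is smaller than that of `T`. -/
lemma sum_two_pow_dominance {α : Type*} [DecidableEq α] (w : α → ℕ) (S T : Finset α) (M : α)
    (hMT : M ∈ T) (hMS : M ∉ S)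
    (hmax : ∀ a, ((a ∈ S ∧ a ∉ T) ∨ (a ∈ T ∧ a ∉ S)) → w a ≤ w M)
    (hinj : Set.InjOn w ↑(S ∪ T)) :
    ∑ a ∈ S, 2^(w a) < ∑ a ∈ T, 2^(w a) := by
  have hsplitS : ∑ a ∈ S, 2^(w a) = ∑ a ∈ S ∩ T, 2^(w a) + ∑ a ∈ S \ T, 2^(w a) := by
    rw [← Finset.sum_union (Finset.disjoint_right.2 (fun a ha => (Finset.mem_sdiff.1 ha).2 ∘
      (fun h => (Finset.mem_inter.1 h).2)))]
    · congr 1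
      ext a
      simp only [Finset.mem_union, Finset.mem_inter, Finset.mem_sdiff]
      tauto
  have hsplitT : ∑ a ∈ T, 2^(w a) = ∑ a ∈ S ∩ T, 2^(w a) + ∑ a ∈ T \ S, 2^(w a) := by
    rw [← Finset.sum_union (Finset.disjoint_right.2 (fun a ha => (Finset.mem_sdiff.1 ha).2 ∘
      (fun h => (Finset.mem_inter.1 h).1)))]
    · congr 1
      ext a
      simp only [Finset.mem_union, Finset.mem_inter, Finset.mem_sdiff]
      tauto
  have hlt : ∑ a ∈ S \ T, 2^(w a) < 2^(w M) := by
    apply sum_two_pow_lt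
    · intro a ha
      obtain ⟨haS, haT⟩ := Finset.mem_sdiff.1 ha
      have hle := hmax a (Or.inl ⟨haS, haT⟩)
      have hne : a ≠ M := fun h => haT (h ▸ hMT)
      have : w a ≠ w M := fun h => hne (hinj (Finset.mem_coe.2 (Finset.mem_union_left _ haS))
        (Finset.mem_coe.2 (Finset.mem_union_right _ hMT)) h)
      omega
    · intro a ha b hb hab
      exact hinj (Finset.mem_coe.2 (Finset.mem_union_left _ (Finset.mem_sdiff.1 ha).1))
        (Finset.mem_coe.2 (Finset.mem_union_left _ (Finset.mem_sdiff.1 hb).1)) hab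
  have hge : 2^(w M) ≤ ∑ a ∈ T \ S, 2^(w a) :=
    Finset.single_le_sum (f := fun a => 2^(w a)) (fun a _ => Nat.zero_le _)
      (Finset.mem_sdiff.2 ⟨hMT, hMS⟩)
  omega

lemma sym_diff_nonempty {α : Type*} [DecidableEq α] {S T : Finset α} (h : S ≠ T) :
    ((S \ T) ∪ (T \ S)).Nonempty := by
  rw [Finset.nonempty_iff_ne_empty]
  intro hc
  apply h
  have h1 : S \ T = ∅ := Finset.union_eq_empty.1 hc |>.1
  have h2 : T \ S = ∅ := Finset.union_eq_empty.1 hc |>.2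
  exact Finset.Subset.antisymm (Finset.sdiff_eq_empty_iff_subset.1 h1)
    (Finset.sdiff_eq_empty_iff_subset.1 h2)

lemma rearr_lt {a b c d : ℕ} (hab : a < b) (hcd : c < d) :
    b * c + a * d < b * d + a * c := by
  obtain ⟨t, ht, rfl⟩ : ∃ t, 0 < t ∧ d = c + t := ⟨d - c, by omega, by omega⟩
  have h1 : a * t < b * t := Nat.mul_lt_mul_of_lt_of_le hab (le_refl t) ht
  ring_nf
  nlinarith

lemma sum_exchange (H : Finset (Finset V)) (F : V → Finset V → ℕ) :
    ∑ e ∈ H, ∑ v ∈ e, F v e = ∑ v ∈ H.sup id, ∑ e ∈ H.filter (fun g => v ∈ g), F v e := by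
  have hsub : ∀ e ∈ H, e ⊆ H.sup id := fun e he => Finset.le_sup (f := id) he
  have : ∀ v, ∑ e ∈ H.filter (fun g => v ∈ g), F v e = ∑ e ∈ H, if v ∈ e then F v e else 0 :=
    fun v => Finset.sum_filter _ _
  simp only [this]
  rw [Finset.sum_comm]
  apply Finset.sum_congr rfl
  intro e he
  rw [← Finset.sum_filter]
  congr 1
  ext v
  simp only [Finset.mem_filter]
  exact ⟨fun hh => ⟨hsub e he hh, hh⟩, fun hh => hh.2⟩

end Weights
section DL
variable {V : Type} [DecidableEq V]

lemma exists_dl (H : Finset (Finset V)) :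
    ∃ (i : V → ℕ) (j : Finset V → ℕ),
      Set.InjOn i ↑(H.sup id) ∧ Set.InjOn j ↑H ∧
      (∀ e ∈ H, ∀ f ∈ H, j e < j f → (∑ v ∈ e, 2^(i v)) ≤ ∑ v ∈ f, 2^(i v)) ∧
      (∀ u ∈ H.sup id, ∀ w ∈ H.sup id, i u < i w →
        (∑ g ∈ H.filter (fun g => u ∈ g), 2^(j g)) ≤
          ∑ g ∈ H.filter (fun g => w ∈ g), 2^(j g)) := by
  classical
  set U := H.sup id with hU
  set n := U.card with hn
  set m := H.card with hm
  have hσ0 : Nonempty ({ x // x ∈ U } ≃ Fin n) := ⟨Fintype.equivFinOfCardEq (Fintype.card_coe U)⟩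
  have hτ0 : Nonempty ({ x // x ∈ H } ≃ Fin m) := ⟨Fintype.equivFinOfCardEq (Fintype.card_coe H)⟩
  haveI : Nonempty (({ x // x ∈ U } ≃ Fin n) × ({ x // x ∈ H } ≃ Fin m)) :=
    ⟨⟨hσ0.some, hτ0.some⟩⟩
  set iF : ({ x // x ∈ U } ≃ Fin n) → V → ℕ :=
    fun σ v => if h : v ∈ U then (σ ⟨v, h⟩ : ℕ) else 0 with hiF
  set jF : ({ x // x ∈ H } ≃ Fin m) → Finset V → ℕ :=
    fun τ g => if h : g ∈ H then (τ ⟨g, h⟩ : ℕ) else 0 with hjF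
  set W : ({ x // x ∈ U } ≃ Fin n) → Finset V → ℕ :=
    fun σ g => ∑ v ∈ g, 2^(iF σ v) with hW
  set Wd : ({ x // x ∈ H } ≃ Fin m) → V → ℕ :=
    fun τ v => ∑ g ∈ H.filter (fun g => v ∈ g), 2^(jF τ g) with hWd
  set Φ : (({ x // x ∈ U } ≃ Fin n) × ({ x // x ∈ H } ≃ Fin m)) → ℕ :=
    fun p => ∑ e ∈ H, ∑ v ∈ e, 2^(iF p.1 v) * 2^(jF p.2 e) with hΦ
  -- edge-factored and vertex-factored forms of Φ
  have hedge : ∀ p, Φ p = ∑ e ∈ H, W p.1 e * 2^(jF p.2 e) := by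
    intro p
    apply Finset.sum_congr rfl
    intro e he
    rw [hW, Finset.sum_mul]
  have hvert : ∀ p, Φ p = ∑ v ∈ U, Wd p.2 v * 2^(iF p.1 v) := by
    intro p
    rw [hΦ]
    simp only
    rw [sum_exchange H (fun v e => 2^(iF p.1 v) * 2^(jF p.2 e))]
    apply Finset.sum_congr rfl
    intro v hv
    rw [hWd, Finset.sum_mul]
    apply Finset.sum_congr rfl
    intro g hg
    ring
  obtain ⟨p, -, hp⟩ := Finset.exists_max_image Finset.univ Φ Finset.univ_nonempty
  refine ⟨iF p.1, jF p.2, ?_, ?_, ?_, ?_⟩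
  · intro u hu w hw huw
    rw [hiF] at huw
    simp only [dif_pos (Finset.mem_coe.1 hu), dif_pos (Finset.mem_coe.1 hw)] at huw
    have := p.1.injective (Fin.val_injective huw)
    exact congrArg Subtype.val this
  · intro e he f hf hef
    rw [hjF] at hef
    simp only [dif_pos (Finset.mem_coe.1 he), dif_pos (Finset.mem_coe.1 hf)] at hef
    have := p.2.injective (Fin.val_injective hef)
    exact congrArg Subtype.val this
  · -- monoE
    intro e he f hf hjlt
    by_contra hcon
    push_neg at hcon
    have hef : e ≠ f := by rintro rfl; exact lt_irrefl _ hjlt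
    set τ' : { x // x ∈ H } ≃ Fin m := p.2.trans (Equiv.swap (p.2 ⟨e, he⟩) (p.2 ⟨f, hf⟩)) with hτ'
    have hje : jF τ' e = jF p.2 f := by
      rw [hjF]
      simp only [dif_pos he, dif_pos hf, hτ', Equiv.trans_apply, Equiv.swap_apply_left]
    have hjf : jF τ' f = jF p.2 e := by
      rw [hjF]
      simp only [dif_pos he, dif_pos hf, hτ', Equiv.trans_apply, Equiv.swap_apply_right]
    have hjrest : ∀ g ∈ H, g ≠ e → g ≠ f → jF τ' g = jF p.2 g := by
      intro g hg hge hgf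
      rw [hjF]
      simp only [dif_pos hg, hτ', Equiv.trans_apply]
      rw [Equiv.swap_apply_of_ne_of_ne]
      · exact fun hc => hge (congrArg Subtype.val (p.2.injective hc))
      · exact fun hc => hgf (congrArg Subtype.val (p.2.injective hc))
    have hfE : f ∈ H.erase e := Finset.mem_erase.2 ⟨fun hc => hef hc.symm, hf⟩
    have key : ∀ (jf : Finset V → ℕ),
        ∑ g ∈ H, W p.1 g * 2^(jf g) =
          W p.1 e * 2^(jf e) + (W p.1 f * 2^(jf f) +
            ∑ g ∈ (H.erase e).erase f, W p.1 g * 2^(jf g)) := by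
      intro jf
      rw [← Finset.add_sum_erase H _ he, ← Finset.add_sum_erase (H.erase e) _ hfE]
    have hresteq : ∑ g ∈ (H.erase e).erase f, W p.1 g * 2^(jF τ' g) =
        ∑ g ∈ (H.erase e).erase f, W p.1 g * 2^(jF p.2 g) := by
      apply Finset.sum_congr rfl
      intro g hg
      have hgf := (Finset.mem_erase.1 hg).1
      have hge := (Finset.mem_erase.1 (Finset.mem_erase.1 hg).2).1
      rw [hjrest g (Finset.mem_erase.1 (Finset.mem_erase.1 hg).2).2 hge hgf]
    have hle := hp (p.1, τ') (Finset.mem_univ _)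
    rw [hedge (p.1, τ'), hedge p] at hle
    simp only at hle
    rw [key (jF τ'), key (jF p.2), hresteq, hje, hjf] at hle
    have hpow : 2^(jF p.2 e) < 2^(jF p.2 f) := Nat.pow_lt_pow_right one_lt_two hjlt
    have hcon' : W p.1 f < W p.1 e := hcon
    have := rearr_lt hcon' hpow
    omega
  · -- monoV
    intro u hu w hw hilt
    by_contra hcon
    push_neg at hcon
    have huw : u ≠ w := by rintro rfl; exact lt_irrefl _ hilt
    have huU : u ∈ U := hu
    have hwU : w ∈ U := hw
    set σ' : { x // x ∈ U } ≃ Fin n := p.1.trans (Equiv.swap (p.1 ⟨u, huU⟩) (p.1 ⟨w, hwU⟩)) with hσ'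
    have hie : iF σ' u = iF p.1 w := by
      rw [hiF]
      simp only [dif_pos huU, dif_pos hwU, hσ', Equiv.trans_apply, Equiv.swap_apply_left]
    have hif : iF σ' w = iF p.1 u := by
      rw [hiF]
      simp only [dif_pos huU, dif_pos hwU, hσ', Equiv.trans_apply, Equiv.swap_apply_right]
    have hirest : ∀ v ∈ U, v ≠ u → v ≠ w → iF σ' v = iF p.1 v := by
      intro v hv hvu hvw
      rw [hiF]
      simp only [dif_pos hv, hσ', Equiv.trans_apply]
      rw [Equiv.swap_apply_of_ne_of_ne]
      · exact fun hc => hvu (congrArg Subtype.val (p.1.injective hc))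
      · exact fun hc => hvw (congrArg Subtype.val (p.1.injective hc))
    have hwE : w ∈ U.erase u := Finset.mem_erase.2 ⟨fun hc => huw hc.symm, hwU⟩
    have key : ∀ (ifn : V → ℕ),
        ∑ v ∈ U, Wd p.2 v * 2^(ifn v) =
          Wd p.2 u * 2^(ifn u) + (Wd p.2 w * 2^(ifn w) +
            ∑ v ∈ (U.erase u).erase w, Wd p.2 v * 2^(ifn v)) := by
      intro ifn
      rw [← Finset.add_sum_erase U _ huU, ← Finset.add_sum_erase (U.erase u) _ hwE]
    have hresteq : ∑ v ∈ (U.erase u).erase w, Wd p.2 v * 2^(iF σ' v) =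
        ∑ v ∈ (U.erase u).erase w, Wd p.2 v * 2^(iF p.1 v) := by
      apply Finset.sum_congr rfl
      intro v hv
      have hvw := (Finset.mem_erase.1 hv).1
      have hvu := (Finset.mem_erase.1 (Finset.mem_erase.1 hv).2).1
      rw [hirest v (Finset.mem_erase.1 (Finset.mem_erase.1 hv).2).2 hvu hvw]
    have hle := hp (σ', p.2) (Finset.mem_univ _)
    rw [hvert (σ', p.2), hvert p] at hle
    simp only at hle
    rw [key (iF σ'), key (iF p.1), hresteq, hie, hif] at hle
    have hpow : 2^(iF p.1 u) < 2^(iF p.1 w) := Nat.pow_lt_pow_right one_lt_two hilt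
    have hcon' : Wd p.2 w < Wd p.2 u := hcon
    have := rearr_lt hcon' hpow
    omega

end DL
section Ladder
variable {V : Type} [DecidableEq V] (H : Finset (Finset V)) (i : V → ℕ) (j : Finset V → ℕ)

def MonoE : Prop := ∀ e ∈ H, ∀ f ∈ H, j e < j f → (∑ v ∈ e, 2^(i v)) ≤ ∑ v ∈ f, 2^(i v)

def MonoV : Prop := ∀ u ∈ H.sup id, ∀ w ∈ H.sup id, i u < i w →
  (∑ g ∈ H.filter (fun g => u ∈ g), 2^(j g)) ≤ ∑ g ∈ H.filter (fun g => w ∈ g), 2^(j g)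

variable {H i j}

lemma edge_sub {e : Finset V} (he : e ∈ H) : e ⊆ H.sup id := Finset.le_sup (f := id) he

lemma topV_spec (hiInj : Set.InjOn i ↑(H.sup id)) (hmE : MonoE H i j)
    {e f : Finset V} (he : e ∈ H) (hf : f ∈ H) (hlt : j e < j f) :
    ∃ z, z ∈ f ∧ z ∉ e ∧ ∀ v, ((v ∈ e ∧ v ∉ f) ∨ (v ∈ f ∧ v ∉ e)) → i v ≤ i z := by
  have hef : e ≠ f := by rintro rfl; exact lt_irrefl _ hlt
  obtain ⟨M, hM, hmax⟩ := Finset.exists_max_image ((e \ f) ∪ (f \ e)) i (sym_diff_nonempty hef)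
  have hmax' : ∀ v, ((v ∈ e ∧ v ∉ f) ∨ (v ∈ f ∧ v ∉ e)) → i v ≤ i M := by
    intro v hv
    apply hmax
    rcases hv with ⟨h1, h2⟩ | ⟨h1, h2⟩
    · exact Finset.mem_union_left _ (Finset.mem_sdiff.2 ⟨h1, h2⟩)
    · exact Finset.mem_union_right _ (Finset.mem_sdiff.2 ⟨h1, h2⟩)
  have hMcase := Finset.mem_union.1 hM
  rcases hMcase with hMe | hMf
  · exfalso
    obtain ⟨hMe1, hMe2⟩ := Finset.mem_sdiff.1 hMe
    have hdom : ∑ v ∈ f, 2^(i v) < ∑ v ∈ e, 2^(i v) := by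
      apply sum_two_pow_dominance i f e M hMe1 hMe2
      · intro a ha
        apply hmax'
        tauto
      · intro a ha b hb hab
        apply hiInj _ _ hab
        · rcases Finset.mem_union.1 (Finset.mem_coe.1 ha) with h | h
          · exact Finset.mem_coe.2 (edge_sub hf h)
          · exact Finset.mem_coe.2 (edge_sub he h)
        · rcases Finset.mem_union.1 (Finset.mem_coe.1 hb) with h | h
          · exact Finset.mem_coe.2 (edge_sub hf h)
          · exact Finset.mem_coe.2 (edge_sub he h)
    have := hmE e he f hf hlt
    omega
  · obtain ⟨hMf1, hMf2⟩ := Finset.mem_sdiff.1 hMf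
    exact ⟨M, hMf1, hMf2, hmax'⟩

lemma topE_spec (hjInj : Set.InjOn j ↑H) (hmV : MonoV H i j)
    {x y : V} {c : Finset V} (hyU : y ∈ H.sup id)
    (hilt : i x < i y) (hc : c ∈ H) (hxc : x ∈ c) (hyc : y ∉ c) :
    ∃ d, d ∈ H ∧ y ∈ d ∧ x ∉ d ∧
      ∀ h ∈ H, ((x ∈ h ∧ y ∉ h) ∨ (y ∈ h ∧ x ∉ h)) → j h ≤ j d := by
  set Sx := H.filter (fun g => x ∈ g) with hSx
  set Sy := H.filter (fun g => y ∈ g) with hSy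
  have hxU : x ∈ H.sup id := edge_sub hc hxc
  have hcD : c ∈ (Sx \ Sy) ∪ (Sy \ Sx) := by
    apply Finset.mem_union_left
    rw [Finset.mem_sdiff, hSx, hSy, Finset.mem_filter, Finset.mem_filter]
    exact ⟨⟨hc, hxc⟩, fun h => hyc h.2⟩
  obtain ⟨M, hM, hmax⟩ := Finset.exists_max_image ((Sx \ Sy) ∪ (Sy \ Sx)) j ⟨c, hcD⟩
  have hmem_iff : ∀ h, h ∈ (Sx \ Sy) ∪ (Sy \ Sx) ↔
      (h ∈ H ∧ ((x ∈ h ∧ y ∉ h) ∨ (y ∈ h ∧ x ∉ h))) := by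
    intro h
    simp only [Finset.mem_union, Finset.mem_sdiff, hSx, hSy, Finset.mem_filter]
    tauto
  have hmax' : ∀ h ∈ H, ((x ∈ h ∧ y ∉ h) ∨ (y ∈ h ∧ x ∉ h)) → j h ≤ j M := by
    intro h hh hxor
    exact hmax h ((hmem_iff h).2 ⟨hh, hxor⟩)
  have hinj2 : Set.InjOn j ↑(Sy ∪ Sx) := by
    apply Set.InjOn.mono _ hjInj
    intro g hg
    rcases Finset.mem_union.1 (Finset.mem_coe.1 hg) with h | h
    · exact Finset.mem_coe.2 (Finset.mem_filter.1 h).1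
    · exact Finset.mem_coe.2 (Finset.mem_filter.1 h).1
  rcases Finset.mem_union.1 hM with hMx | hMy
  · exfalso
    obtain ⟨hM1, hM2⟩ := Finset.mem_sdiff.1 hMx
    have hdom : ∑ g ∈ Sy, 2^(j g) < ∑ g ∈ Sx, 2^(j g) := by
      apply sum_two_pow_dominance j Sy Sx M hM1 hM2
      · intro a ha
        apply hmax
        rw [hmem_iff]
        rcases ha with ⟨h1, h2⟩ | ⟨h1, h2⟩
        · rw [hSy, Finset.mem_filter] at h1
          rw [hSx, Finset.mem_filter] at h2
          exact ⟨h1.1, Or.inr ⟨h1.2, fun hc' => h2 ⟨h1.1, hc'⟩⟩⟩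
        · rw [hSx, Finset.mem_filter] at h1
          rw [hSy, Finset.mem_filter] at h2
          exact ⟨h1.1, Or.inl ⟨h1.2, fun hc' => h2 ⟨h1.1, hc'⟩⟩⟩
      · exact hinj2
    have h9 : ∑ g ∈ Sx, 2^(j g) ≤ ∑ g ∈ Sy, 2^(j g) := hmV x hxU y hyU hilt
    omega
  · obtain ⟨hM1, hM2⟩ := Finset.mem_sdiff.1 hMy
    rw [hSy, Finset.mem_filter] at hM1
    refine ⟨M, hM1.1, hM1.2, ?_, hmax'⟩
    intro hxM
    exact hM2 (Finset.mem_filter.2 ⟨hM1.1, hxM⟩)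

/-- The growing "ladder" configuration extracted from a Γ in a doubly lexical ordering. -/
structure IsLadder (H : Finset (Finset V)) (i : V → ℕ) (j : Finset V → ℕ)
    (k : ℕ) (E : ℕ → Finset V) (y : ℕ → V) : Prop where
  hk : 3 ≤ k
  hE : ∀ s, 1 ≤ s → s ≤ k → E s ∈ H
  hEmono : ∀ s t, 1 ≤ s → s < t → t ≤ k → j (E s) < j (E t)
  hymono : ∀ s t, s < t → t < k → i (y s) < i (y t)
  hmem : ∀ t, t < k → ∀ s, 1 ≤ s → s ≤ k →
    (y t ∈ E s ↔ (t = 0 ∧ (s = 1 ∨ s = 2)) ∨ (1 ≤ t ∧ t + 2 ≤ k ∧ (s = t ∨ s = t + 2)) ∨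
      (t + 1 = k ∧ s + 1 = k))
  hA : ∀ r, 1 ≤ r → r + 2 ≤ k → ∀ v, i (y (r+1)) < i v → (v ∈ E r ↔ v ∈ E (r+1))
  hB : ∀ t, t + 3 ≤ k → ∀ h ∈ H, j (E (t+3)) < j h → (y t ∈ h ↔ y (t+1) ∈ h)

lemma IsLadder.yU {k E y} (L : IsLadder H i j k E y) : ∀ t, t < k → y t ∈ H.sup id := by
  intro t ht
  have h3 := L.hk
  rcases Nat.eq_zero_or_pos t with rfl | htpos
  · have := (L.hmem 0 ht 1 le_rfl (by omega)).2 (Or.inl ⟨rfl, Or.inl rfl⟩)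
    exact edge_sub (L.hE 1 le_rfl (by omega)) this
  · by_cases h2 : t + 2 ≤ k
    · have := (L.hmem t ht t (by omega) (by omega)).2 (Or.inr (Or.inl ⟨htpos, h2, Or.inl rfl⟩))
      exact edge_sub (L.hE t (by omega) (by omega)) this
    · have ht1 : t + 1 = k := by omega
      have := (L.hmem t ht (k-1) (by omega) (by omega)).2 (Or.inr (Or.inr ⟨ht1, by omega⟩))
      exact edge_sub (L.hE (k-1) (by omega) (by omega)) this

lemma IsLadder.card_le {k E y} (hjInj : Set.InjOn j ↑H) (L : IsLadder H i j k E y) :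
    k ≤ H.card := by
  have : (Finset.Icc 1 k).card ≤ H.card := by
    apply Finset.card_le_card_of_injOn E
    · intro s hs
      rw [Finset.mem_coe, Finset.mem_Icc] at hs
      exact L.hE s hs.1 hs.2
    · intro s hs t ht hst
      rw [Finset.mem_coe, Finset.mem_Icc] at hs ht
      by_contra hne
      rcases Nat.lt_or_ge s t with h | h
      · have := L.hEmono s t hs.1 h ht.2
        rw [hst] at this
        exact lt_irrefl _ this
      · have hlt : t < s := by omega
        have := L.hEmono t s ht.1 hlt hs.2
        rw [hst] at this
        exact lt_irrefl _ this
  rw [Nat.card_Icc] at this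
  omega

end Ladder
section CertBuild
variable {V : Type} [DecidableEq V] {H : Finset (Finset V)}

lemma pair_eq_of_doubleton_eq {y : ℕ → V} {a b c d : ℕ}
    (hab : a < b) (hcd : c < d) (hbn : b < n) (hdn : d < n)
    (hyinj : ∀ s t, s < t → t < n → y s ≠ y t)
    (h : ({y a, y b} : Finset V) = {y c, y d}) : a = c ∧ b = d := by
  have hy : ∀ s t, s < n → t < n → y s = y t → s = t := by
    intro s t hs ht he
    by_contra hne
    rcases Nat.lt_or_ge s t with hl | hl
    · exact hyinj s t hl ht he
    · exact hyinj t s (by omega) hs he.symm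
  have hac : y a ∈ ({y c, y d} : Finset V) := h ▸ (Finset.mem_insert_self _ _)
  have hbc : y b ∈ ({y c, y d} : Finset V) := h ▸ (Finset.mem_insert.2 (Or.inr (Finset.mem_singleton_self _)))
  have hca : y c ∈ ({y a, y b} : Finset V) := h ▸ (Finset.mem_insert_self _ _)
  simp only [Finset.mem_insert, Finset.mem_singleton] at hac hbc hca
  have h1 : a = c ∨ a = d := by
    rcases hac with h' | h'
    · exact Or.inl (hy a c (by omega) (by omega) h')
    · exact Or.inr (hy a d (by omega) (by omega) h')
  have h2 : b = c ∨ b = d := by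
    rcases hbc with h' | h'
    · exact Or.inl (hy b c (by omega) (by omega) h')
    · exact Or.inr (hy b d (by omega) (by omega) h')
  have h3 : c = a ∨ c = b := by
    rcases hca with h' | h'
    · exact Or.inl (hy c a (by omega) (by omega) h')
    · exact Or.inr (hy c b (by omega) (by omega) h')
  omega

lemma cert_of_indexed (N : ℕ) (E : ℕ → Finset V) (y : ℕ → V) (p q : ℕ → ℕ)
    (hN : 1 ≤ N)
    (hEH : ∀ s, 1 ≤ s → s ≤ N → E s ∈ H)
    (hEinj : ∀ s t, 1 ≤ s → s < t → t ≤ N → E s ≠ E t)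
    (hyinj : ∀ s t, s < t → t < N → y s ≠ y t)
    (hpq : ∀ s, 1 ≤ s → s ≤ N → p s < q s ∧ q s < N)
    (hmem : ∀ t, t < N → ∀ s, 1 ≤ s → s ≤ N → (y t ∈ E s ↔ (t = p s ∨ t = q s)))
    (hdeg : ∀ t, t < N → ((Finset.Icc 1 N).filter (fun s => t = p s ∨ t = q s)).card = 2)
    (hpairs : ∀ s t, 1 ≤ s → s < t → t ≤ N → (p s, q s) ≠ (p t, q t)) :
    ∃ X G, CycCert H X G := by
  classical
  have hEinj' : ∀ s t, 1 ≤ s → s ≤ N → 1 ≤ t → t ≤ N → E s = E t → s = t := by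
    intro s t hs1 hs2 ht1 ht2 he
    by_contra hne
    rcases Nat.lt_or_ge s t with hl | hl
    · exact hEinj s t hs1 hl ht2 he
    · exact hEinj t s ht1 (by omega) hs2 he.symm
  have hyinj' : ∀ s t, s < N → t < N → y s = y t → s = t := by
    intro s t hs ht he
    by_contra hne
    rcases Nat.lt_or_ge s t with hl | hl
    · exact hyinj s t hl ht he
    · exact hyinj t s (by omega) hs he.symm
  refine ⟨(Finset.range N).image y, (Finset.Icc 1 N).image E, ?_, ?_, ?_, ?_, ?_⟩
  · intro g hg
    obtain ⟨s, hs, rfl⟩ := Finset.mem_image.1 hg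
    rw [Finset.mem_Icc] at hs
    exact hEH s hs.1 hs.2
  · exact ⟨E 1, Finset.mem_image.2 ⟨1, Finset.mem_Icc.2 ⟨le_rfl, hN⟩, rfl⟩⟩
  · -- degree of each vertex is 2
    intro x hx
    obtain ⟨t, ht, rfl⟩ := Finset.mem_image.1 hx
    rw [Finset.mem_range] at ht
    have hset : ((Finset.Icc 1 N).image E).filter (fun g => y t ∈ g)
        = ((Finset.Icc 1 N).filter (fun s => t = p s ∨ t = q s)).image E := by
      ext g
      simp only [Finset.mem_filter, Finset.mem_image]
      constructor
      · rintro ⟨⟨s, hs, rfl⟩, hytg⟩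
        have hs' := Finset.mem_Icc.1 hs
        exact ⟨s, ⟨hs, (hmem t ht s hs'.1 hs'.2).1 hytg⟩, rfl⟩
      · rintro ⟨s, ⟨hs1, hs2⟩, rfl⟩
        have hs' := Finset.mem_Icc.1 hs1
        exact ⟨⟨s, hs1, rfl⟩, (hmem t ht s hs'.1 hs'.2).2 hs2⟩
    rw [hset, Finset.card_image_of_injOn, hdeg t ht]
    intro s hs u hu he
    rw [Finset.mem_coe, Finset.mem_filter, Finset.mem_Icc] at hs hu
    exact hEinj' s u hs.1.1 hs.1.2 hu.1.1 hu.1.2 he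
  · -- each edge contains exactly two vertices of X
    intro g hg
    obtain ⟨s, hs, rfl⟩ := Finset.mem_image.1 hg
    rw [Finset.mem_Icc] at hs
    obtain ⟨hpq1, hpq2⟩ := hpq s hs.1 hs.2
    have hset : (Finset.range N).image y ∩ E s = {y (p s), y (q s)} := by
      ext x
      simp only [Finset.mem_inter, Finset.mem_image, Finset.mem_insert, Finset.mem_singleton]
      constructor
      · rintro ⟨⟨t, htr, rfl⟩, hyE⟩
        rw [Finset.mem_range] at htr
        rcases (hmem t htr s hs.1 hs.2).1 hyE with rfl | rfl
        · exact Or.inl rfl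
        · exact Or.inr rfl
      · rintro (rfl | rfl)
        · exact ⟨⟨p s, Finset.mem_range.2 (by omega), rfl⟩,
            (hmem (p s) (by omega) s hs.1 hs.2).2 (Or.inl rfl)⟩
        · exact ⟨⟨q s, Finset.mem_range.2 hpq2, rfl⟩,
            (hmem (q s) hpq2 s hs.1 hs.2).2 (Or.inr rfl)⟩
    rw [hset]
    rw [Finset.card_insert_of_notMem, Finset.card_singleton]
    rw [Finset.mem_singleton]
    exact hyinj (p s) (q s) hpq1 hpq2
  · -- distinct vertex-pairs
    intro g hg g' hg' hne
    obtain ⟨s, hs, rfl⟩ := Finset.mem_image.1 hg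
    obtain ⟨s', hs', rfl⟩ := Finset.mem_image.1 hg'
    rw [Finset.mem_Icc] at hs hs'
    have hss' : s ≠ s' := fun h => hne (h ▸ rfl)
    obtain ⟨hpq1, hpq2⟩ := hpq s hs.1 hs.2
    obtain ⟨hpq1', hpq2'⟩ := hpq s' hs'.1 hs'.2
    have hset : ∀ u, 1 ≤ u → u ≤ N → (Finset.range N).image y ∩ E u = {y (p u), y (q u)} := by
      intro u hu1 hu2
      obtain ⟨hq1, hq2⟩ := hpq u hu1 hu2
      ext x
      simp only [Finset.mem_inter, Finset.mem_image, Finset.mem_insert, Finset.mem_singleton]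
      constructor
      · rintro ⟨⟨t, htr, rfl⟩, hyE⟩
        rw [Finset.mem_range] at htr
        rcases (hmem t htr u hu1 hu2).1 hyE with rfl | rfl
        · exact Or.inl rfl
        · exact Or.inr rfl
      · rintro (rfl | rfl)
        · exact ⟨⟨p u, Finset.mem_range.2 (by omega), rfl⟩,
            (hmem (p u) (by omega) u hu1 hu2).2 (Or.inl rfl)⟩
        · exact ⟨⟨q u, Finset.mem_range.2 hq2, rfl⟩,
            (hmem (q u) hq2 u hu1 hu2).2 (Or.inr rfl)⟩
    rw [hset s hs.1 hs.2, hset s' hs'.1 hs'.2]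
    intro hcon
    obtain ⟨h1, h2⟩ := pair_eq_of_doubleton_eq (n := N) hpq1 hpq1' hpq2 hpq2' hyinj hcon
    rcases Nat.lt_or_ge s s' with hl | hl
    · exact hpairs s s' hs.1 hl hs'.2 (by rw [h1, h2])
    · have : s' < s := by omega
      exact hpairs s' s hs'.1 this hs.2 (by rw [h1, h2])

end CertBuild
section LBase
variable {V : Type} [DecidableEq V] {H : Finset (Finset V)} {i : V → ℕ} {j : Finset V → ℕ}

lemma ladder_base (hiInj : Set.InjOn i ↑(H.sup id)) (hjInj : Set.InjOn j ↑H)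
    (hmE : MonoE H i j) (hmV : MonoV H i j)
    {e f : Finset V} {u w : V} (he : e ∈ H) (hf : f ∈ H) (hje : j e < j f)
    (hue : u ∈ e) (huf : u ∈ f) (hwe : w ∈ e) (hwf : w ∉ f) (hiuw : i u < i w) :
    (∃ X G, CycCert H X G) ∨ ∃ E y, IsLadder H i j 3 E y := by
  obtain ⟨z, hzf, hze, hzmax⟩ := topV_spec hiInj hmE he hf hje
  obtain ⟨d, hd, hwd, hud, hdmax⟩ :=
    topE_spec hjInj hmV (edge_sub he hwe) hiuw hf huf hwf
  have hzU : z ∈ H.sup id := edge_sub hf hzf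
  have hwU : w ∈ H.sup id := edge_sub he hwe
  have huU : u ∈ H.sup id := edge_sub he hue
  have hjfd : j f < j d := by
    have h1 : j f ≤ j d := hdmax f hf (Or.inl ⟨huf, hwf⟩)
    have h2 : f ≠ d := fun h => hwf (h ▸ hwd)
    have h3 : j f ≠ j d := fun h => h2 (hjInj hf hd h)
    omega
  have hiwz : i w < i z := by
    have h1 : i w ≤ i z := hzmax w (Or.inl ⟨hwe, hwf⟩)
    have h2 : w ≠ z := fun h => hze (h ▸ hwe)
    have h3 : i w ≠ i z := fun h => h2 (hiInj hwU hzU h)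
    omega
  have hefd : e ≠ f ∧ e ≠ d ∧ f ≠ d := by
    refine ⟨?_, ?_, ?_⟩ <;> intro hcon
    · rw [hcon] at hje; exact lt_irrefl _ hje
    · rw [hcon] at hje; omega
    · rw [hcon] at hjfd; exact lt_irrefl _ hjfd
  have huwz : u ≠ w ∧ u ≠ z ∧ w ≠ z := by
    refine ⟨?_, ?_, ?_⟩ <;> intro hcon
    · rw [hcon] at hiuw; exact lt_irrefl _ hiuw
    · rw [hcon] at hiuw; omega
    · rw [hcon] at hiwz; exact lt_irrefl _ hiwz
  by_cases hzd : z ∈ d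
  · -- pure 3-cycle
    left
    apply cert_of_indexed 3 (fun s => if s = 1 then e else if s = 2 then f else d)
      (fun t => if t = 0 then u else if t = 1 then w else z)
      (fun s => if s ≤ 2 then 0 else 1) (fun s => if s = 1 then 1 else 2)
    · omega
    · intro s hs1 hs2
      interval_cases s <;> norm_num [he, hf, hd]
    · intro s t hs1 hst ht
      have hs2 : s ≤ 3 := by omega
      interval_cases s <;> interval_cases t <;> norm_num [hefd.1, hefd.2.1, hefd.2.2]
    · intro s t hst ht
      have hs2 : s ≤ 2 := by omega
      interval_cases s <;> interval_cases t <;> norm_num [huwz.1, huwz.2.1, huwz.2.2]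
    · intro s hs1 hs2
      interval_cases s <;> norm_num
    · intro t ht s hs1 hs2
      interval_cases t <;> interval_cases s <;>
        norm_num [hue, huf, hud, hwe, hwf, hwd, hze, hzf, hzd]
    · intro t ht
      interval_cases t <;> decide
    · intro s t hs1 hst ht
      have hs2 : s ≤ 3 := by omega
      interval_cases s <;> interval_cases t <;> norm_num
  · -- ladder of length 3
    right
    refine ⟨fun s => if s = 1 then e else if s = 2 then f else d,
      fun t => if t = 0 then u else if t = 1 then w else z, ?_, ?_, ?_, ?_, ?_, ?_, ?_⟩
    · omega
    · intro s hs1 hs2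
      interval_cases s <;> norm_num [he, hf, hd]
    · intro s t hs1 hst ht
      have hs2 : s ≤ 3 := by omega
      interval_cases s <;> interval_cases t <;> norm_num [hje, hjfd] <;> omega
    · intro s t hst ht
      have hs2 : s ≤ 2 := by omega
      interval_cases s <;> interval_cases t <;> norm_num [hiuw, hiwz] <;> omega
    · intro t ht s hs1 hs2
      interval_cases t <;> interval_cases s <;>
        norm_num [hue, huf, hud, hwe, hwf, hwd, hze, hzf, hzd]
    · intro r hr1 hr2
      have hr : r = 1 := by omega
      subst hr
      intro v hv
      norm_num at hv ⊢
      constructor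
      · intro hve
        by_contra hvf
        have := hzmax v (Or.inl ⟨hve, hvf⟩)
        omega
      · intro hvf
        by_contra hve
        have := hzmax v (Or.inr ⟨hvf, hve⟩)
        omega
    · intro t ht h hh hjh
      have ht0 : t = 0 := by omega
      subst ht0
      norm_num at hjh ⊢
      constructor
      · intro huh
        by_contra hwh
        have := hdmax h hh (Or.inl ⟨huh, hwh⟩)
        omega
      · intro hwh
        by_contra huh
        have := hdmax h hh (Or.inr ⟨hwh, huh⟩)
        omega

end LBase
section LStep
variable {V : Type} [DecidableEq V] {H : Finset (Finset V)} {i : V → ℕ} {j : Finset V → ℕ}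

lemma ladder_step (hiInj : Set.InjOn i ↑(H.sup id)) (hjInj : Set.InjOn j ↑H)
    (hmE : MonoE H i j) (hmV : MonoV H i j) {k : ℕ} {E : ℕ → Finset V} {y : ℕ → V}
    (L : IsLadder H i j k E y) :
    (∃ X G, CycCert H X G) ∨ ∃ E' y', IsLadder H i j (k+1) E' y' := by
  obtain ⟨k', rfl⟩ : ∃ k', k = k' + 3 := ⟨k - 3, by have := L.hk; omega⟩
  -- membership facts
  have m1 : y (k'+1) ∈ E (k'+1) :=
    (L.hmem (k'+1) (by omega) (k'+1) (by omega) (by omega)).2 (by omega)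
  have m2 : y (k'+1) ∈ E (k'+3) :=
    (L.hmem (k'+1) (by omega) (k'+3) (by omega) (by omega)).2 (by omega)
  have m3 : y (k'+1) ∉ E (k'+2) := by
    intro hc
    have := (L.hmem (k'+1) (by omega) (k'+2) (by omega) (by omega)).1 hc
    omega
  have m4 : y (k'+2) ∈ E (k'+2) :=
    (L.hmem (k'+2) (by omega) (k'+2) (by omega) (by omega)).2 (by omega)
  have m5 : y (k'+2) ∉ E (k'+3) := by
    intro hc
    have := (L.hmem (k'+2) (by omega) (k'+3) (by omega) (by omega)).1 hc
    omega
  have m6 : y (k'+2) ∉ E (k'+1) := by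
    intro hc
    have := (L.hmem (k'+2) (by omega) (k'+1) (by omega) (by omega)).1 hc
    omega
  have iy : i (y (k'+1)) < i (y (k'+2)) := L.hymono _ _ (by omega) (by omega)
  -- the new edge D
  obtain ⟨D, hD, hyD, hyD', hDmax⟩ :=
    topE_spec hjInj hmV (L.yU (k'+2) (by omega)) iy (L.hE (k'+1) (by omega) (by omega)) m1 m6
  have hjD : j (E (k'+3)) < j D := by
    have h1 : j (E (k'+3)) ≤ j D := hDmax _ (L.hE (k'+3) (by omega) (by omega)) (Or.inl ⟨m2, m5⟩)
    have h2 : E (k'+3) ≠ D := fun h => m5 (h ▸ hyD)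
    have h3 : j (E (k'+3)) ≠ j D := fun h => h2 (hjInj (L.hE (k'+3) (by omega) (by omega)) hD h)
    omega
  have hjall : ∀ s, 1 ≤ s → s ≤ k'+3 → j (E s) < j D := by
    intro s hs1 hs2
    rcases Nat.lt_or_ge s (k'+3) with h | h
    · have := L.hEmono s (k'+3) hs1 h (by omega)
      omega
    · have : s = k'+3 := by omega
      subst this
      exact hjD
  -- old vertices are not in D
  have hyoldD : ∀ t, t ≤ k'+1 → y t ∉ D := by
    have key : ∀ m t, t + m = k'+1 → y t ∉ D := by
      intro m
      induction m with
      | zero =>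
        intro t ht
        have h9 : t = k'+1 := by omega
        subst h9
        exact hyD'
      | succ m ih =>
        intro t ht
        have hB := L.hB t (by omega) D hD (hjall (t+3) (by omega) (by omega))
        intro hc
        exact ih (t+1) (by omega) (hB.1 hc)
    intro t ht
    exact key (k'+1-t) t (by omega)
  -- the new vertex z
  obtain ⟨z, hzc, hzb, hzmax⟩ := topV_spec hiInj hmE (L.hE (k'+2) (by omega) (by omega))
    (L.hE (k'+3) (by omega) (by omega)) (L.hEmono (k'+2) (k'+3) (by omega) (by omega) (by omega))
  have hzU : z ∈ H.sup id := edge_sub (L.hE (k'+3) (by omega) (by omega)) hzc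
  have hiz : i (y (k'+2)) < i z := by
    have h1 : i (y (k'+2)) ≤ i z := hzmax _ (Or.inl ⟨m4, m5⟩)
    have h2 : y (k'+2) ≠ z := fun h => hzb (h ▸ m4)
    have h3 : i (y (k'+2)) ≠ i z := fun h => h2 (hiInj (L.yU (k'+2) (by omega)) hzU h)
    omega
  have hizall : ∀ t, t < k'+3 → i (y t) < i z := by
    intro t ht
    rcases Nat.lt_or_ge t (k'+2) with h | h
    · have := L.hymono t (k'+2) h (by omega)
      omega
    · have : t = k'+2 := by omega
      subst this
      exact hiz
  -- z is in no old edge except E (k'+3)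
  have znotold : ∀ s, 1 ≤ s → s ≤ k'+2 → z ∉ E s := by
    have key : ∀ m s, 1 ≤ s → s + m = k'+2 → z ∉ E s := by
      intro m
      induction m with
      | zero =>
        intro s hs1 hs
        have h9 : s = k'+2 := by omega
        subst h9
        exact hzb
      | succ m ih =>
        intro s hs1 hs
        have hA := L.hA s hs1 (by omega) z (hizall (s+1) (by omega))
        intro hc
        exact ih (s+1) (by omega) (by omega) (hA.1 hc)
    intro s hs1 hs2
    exact key (k'+2-s) s hs1 (by omega)
  -- case split on whether z closes the cycle
  by_cases hzD : z ∈ D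
  · -- build certificate
    left
    apply cert_of_indexed (k'+4) (fun s => if s = k'+4 then D else E s)
      (fun t => if t = k'+3 then z else y t)
      (fun s => if s = 1 then 0 else if s = 2 then 0 else if s = k'+4 then k'+2 else s - 2)
      (fun s => if s = 1 then 1 else if s = 2 then 2 else if s = k'+4 then k'+3 else s)
    · omega
    · intro s hs1 hs2
      by_cases h : s = k'+4
      · simp only [if_pos h]; exact hD
      · simp only [if_neg h]; exact L.hE s hs1 (by omega)
    · -- edges injective
      intro s t hs1 hst ht
      by_cases h : t = k'+4
      · simp only [if_neg (by omega : ¬ s = k'+4), if_pos h]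
        intro hc
        have := hjall s hs1 (by omega)
        rw [hc] at this
        exact lt_irrefl _ this
      · simp only [if_neg (by omega : ¬ s = k'+4), if_neg h]
        intro hc
        have := L.hEmono s t hs1 hst (by omega)
        rw [hc] at this
        exact lt_irrefl _ this
    · -- vertices injective
      intro s t hst ht
      by_cases h : t = k'+3
      · simp only [if_neg (by omega : ¬ s = k'+3), if_pos h]
        intro hc
        have := hizall s (by omega)
        rw [hc] at this
        exact lt_irrefl _ this
      · simp only [if_neg (by omega : ¬ s = k'+3), if_neg h]
        intro hc
        have := L.hymono s t hst (by omega)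
        rw [hc] at this
        exact lt_irrefl _ this
    · -- p q bounds
      intro s hs1 hs2
      split_ifs <;> omega
    · -- membership table
      intro t ht s hs1 hs2
      by_cases hts : t = k'+3
      · rw [if_pos hts]
        by_cases hs : s = k'+4
        · rw [if_pos hs]
          constructor
          · intro _
            right
            split_ifs <;> omega
          · intro _
            exact hzD
        · rw [if_neg hs]
          by_cases hs3 : s = k'+3
          · constructor
            · intro _
              right
              split_ifs <;> omega
            · intro _
              rw [hs3]
              exact hzc
          · constructor
            · intro hc
              exact absurd hc (znotold s hs1 (by omega))
            · intro hc
              exfalso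
              split_ifs at hc <;> omega
      · rw [if_neg hts]
        by_cases hs : s = k'+4
        · rw [if_pos hs]
          constructor
          · intro hc
            have htk : t = k'+2 := by
              by_contra hne
              exact hyoldD t (by omega) hc
            left
            split_ifs <;> omega
          · intro hc
            have h9 : t = k'+2 := by split_ifs at hc <;> omega
            rw [h9]
            exact hyD
        · rw [if_neg hs]
          rw [L.hmem t (by omega) s hs1 (by omega)]
          split_ifs <;> omega
    · -- degrees
      intro t ht
      have hset : (Finset.Icc 1 (k'+4)).filter (fun s =>
            t = (if s = 1 then 0 else if s = 2 then 0 else if s = k'+4 then k'+2 else s - 2) ∨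
            t = (if s = 1 then 1 else if s = 2 then 2 else if s = k'+4 then k'+3 else s))
          = {(if t = 0 then 1 else t), (if t = 0 then 2 else if t + 2 ≤ k'+3 then t+2 else k'+4)} := by
        ext s
        simp only [Finset.mem_filter, Finset.mem_Icc, Finset.mem_insert, Finset.mem_singleton]
        split_ifs <;> omega
      rw [hset, Finset.card_insert_of_notMem, Finset.card_singleton]
      rw [Finset.mem_singleton]
      split_ifs <;> omega
    · -- pairs distinct
      intro s t hs1 hst ht
      intro hc
      rw [Prod.mk.injEq] at hc
      obtain ⟨h1, h2⟩ := hc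
      split_ifs at h1 h2 <;> omega
  · -- extend the ladder
    right
    refine ⟨fun s => if s = k'+4 then D else E s, fun t => if t = k'+3 then z else y t,
      ?_, ?_, ?_, ?_, ?_, ?_, ?_⟩
    · omega
    · intro s hs1 hs2
      by_cases hs : s = k'+4
      · rw [if_pos hs]; exact hD
      · rw [if_neg hs]; exact L.hE s hs1 (by omega)
    · intro s t hs1 hst ht
      by_cases h : t = k'+4
      · rw [if_neg (by omega : ¬ s = k'+4), if_pos h]
        exact hjall s hs1 (by omega)
      · rw [if_neg (by omega : ¬ s = k'+4), if_neg h]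
        exact L.hEmono s t hs1 hst (by omega)
    · intro s t hst ht
      by_cases h : t = k'+3
      · rw [if_neg (by omega : ¬ s = k'+3), if_pos h]
        exact hizall s (by omega)
      · rw [if_neg (by omega : ¬ s = k'+3), if_neg h]
        exact L.hymono s t hst (by omega)
    · intro t ht s hs1 hs2
      by_cases hts : t = k'+3
      · rw [if_pos hts]
        by_cases hs : s = k'+4
        · rw [if_pos hs]
          constructor
          · intro hc
            exact absurd hc hzD
          · intro hc
            exfalso
            omega
        · rw [if_neg hs]
          by_cases hs3 : s = k'+3
          · constructor
            · intro _
              right; right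
              omega
            · intro _
              rw [hs3]
              exact hzc
          · constructor
            · intro hc
              exact absurd hc (znotold s hs1 (by omega))
            · intro hc
              exfalso
              omega
      · rw [if_neg hts]
        by_cases hs : s = k'+4
        · rw [if_pos hs]
          constructor
          · intro hc
            have htk : t = k'+2 := by
              by_contra hne
              exact hyoldD t (by omega) hc
            right; left
            omega
          · intro hc
            have h9 : t = k'+2 := by omega
            rw [h9]
            exact hyD
        · rw [if_neg hs]
          rw [L.hmem t (by omega) s hs1 (by omega)]
          constructor <;> intro h9 <;> omega
    · intro r hr1 hr2 v hv
      by_cases hrk : r = k'+2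
      · rw [if_pos (by omega : r + 1 = k'+3)] at hv
        rw [if_neg (by omega : ¬ r = k'+4), if_neg (by omega : ¬ r + 1 = k'+4), hrk,
          (by omega : k'+2+1 = k'+3)]
        constructor
        · intro hve
          by_contra hvf
          have := hzmax v (Or.inl ⟨hve, hvf⟩)
          omega
        · intro hvf
          by_contra hve
          have := hzmax v (Or.inr ⟨hvf, hve⟩)
          omega
      · rw [if_neg (by omega : ¬ r + 1 = k'+3)] at hv
        rw [if_neg (by omega : ¬ r = k'+4), if_neg (by omega : ¬ r + 1 = k'+4)]
        exact L.hA r hr1 (by omega) v hv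
    · intro t ht3 h hh hjh
      by_cases htk : t = k'+1
      · rw [if_pos (by omega : t + 3 = k'+4)] at hjh
        rw [if_neg (by omega : ¬ t = k'+3), if_neg (by omega : ¬ t + 1 = k'+3), htk,
          (by omega : k'+1+1 = k'+2)]
        constructor
        · intro h1
          by_contra h2
          have := hDmax h hh (Or.inl ⟨h1, h2⟩)
          omega
        · intro h2
          by_contra h1
          have := hDmax h hh (Or.inr ⟨h2, h1⟩)
          omega
      · rw [if_neg (by omega : ¬ t + 3 = k'+4)] at hjh
        rw [if_neg (by omega : ¬ t = k'+3), if_neg (by omega : ¬ t + 1 = k'+3)]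
        exact L.hB t (by omega) h hh hjh

end LStep
section Final
variable {V : Type} [DecidableEq V]

lemma gamma_cert {H : Finset (Finset V)} {i : V → ℕ} {j : Finset V → ℕ}
    (hiInj : Set.InjOn i ↑(H.sup id)) (hjInj : Set.InjOn j ↑H)
    (hmE : MonoE H i j) (hmV : MonoV H i j)
    {e f : Finset V} {u w : V} (he : e ∈ H) (hf : f ∈ H) (hje : j e < j f)
    (hue : u ∈ e) (huf : u ∈ f) (hwe : w ∈ e) (hwf : w ∉ f) (hiuw : i u < i w) :
    ∃ X G, CycCert H X G := by
  have iter : ∀ d k E y, IsLadder H i j k E y → H.card + 1 ≤ k + d →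
      ∃ X G, CycCert H X G := by
    intro d
    induction d with
    | zero =>
      intro k E y L hk
      have := L.card_le hjInj
      omega
    | succ d ih =>
      intro k E y L hk
      rcases ladder_step hiInj hjInj hmE hmV L with h | ⟨E', y', L'⟩
      · exact h
      · exact ih (k+1) E' y' L' (by omega)
  rcases ladder_base hiInj hjInj hmE hmV he hf hje hue huf hwe hwf hiuw with h | ⟨E, y, L⟩
  · exact h
  · exact iter (H.card + 1) 3 E y L (by omega)

lemma nest_exists {H : Finset (Finset V)} (hcf : CycleFree H)
    (hne : (H.sup id).Nonempty) : ∃ v ∈ H.sup id, wsVertex v H := by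
  obtain ⟨i, j, hiInj, hjInj, hmE, hmV⟩ := exists_dl H
  obtain ⟨v₀, hv₀, hmin⟩ := Finset.exists_min_image (H.sup id) i hne
  refine ⟨v₀, hv₀, ?_⟩
  have key : ∀ e ∈ H, ∀ f ∈ H, j e < j f → v₀ ∈ e → v₀ ∈ f → e ⊆ f := by
    intro e he f hf hje hv0e hv0f
    intro w hwe
    by_contra hwf
    have hwU : w ∈ H.sup id := edge_sub he hwe
    have hiv : i v₀ < i w := by
      have h1 := hmin w hwU
      have h2 : v₀ ≠ w := fun h => hwf (h ▸ hv0f)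
      have h3 : i v₀ ≠ i w := fun h => h2 (hiInj hv₀ hwU h)
      omega
    obtain ⟨X, G, hc⟩ := gamma_cert hiInj hjInj hmE hmV he hf hje hv0e hv0f hwe hwf hiv
    exact hcf X G hc
  intro e he f hf hv0e hv0f
  rcases eq_or_ne e f with rfl | hef
  · exact Or.inl (Finset.Subset.refl e)
  · have hjef : j e ≠ j f := fun h => hef (hjInj he hf h)
    rcases Nat.lt_or_ge (j e) (j f) with h | h
    · exact Or.inl (key e he f hf h hv0e hv0f)
    · exact Or.inr (key f hf e he (by omega) hv0f hv0e)

lemma cycleFree_ws : ∀ n (H : Finset (Finset V)), (H.sup id).card ≤ n → CycleFree H →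
    WSReducible H := by
  intro n
  induction n with
  | zero =>
    intro H hcard hcf
    apply WSReducible.base
    intro e he
    have h1 : (H.sup id) = ∅ := Finset.card_eq_zero.1 (by omega)
    have h2 := edge_sub he
    rw [h1] at h2
    exact Finset.subset_empty.1 h2
  | succ n ih =>
    intro H hcard hcf
    by_cases hall : ∀ e ∈ H, e = ∅
    · exact WSReducible.base H hall
    · push_neg at hall
      obtain ⟨e, he, hene⟩ := hall
      have hne : (H.sup id).Nonempty := by
        obtain ⟨v, hv⟩ := hene
        exact ⟨v, edge_sub he hv⟩
      obtain ⟨v, hv, hws⟩ := nest_exists hcf hne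
      apply WSReducible.step H v hv hws
      apply ih
      · have hsub : (H.image fun e => e.erase v).sup id ⊆ (H.sup id).erase v := by
          intro x hx
          rw [Finset.mem_sup] at hx
          obtain ⟨g, hg, hxg⟩ := hx
          obtain ⟨e', he', rfl⟩ := Finset.mem_image.1 hg
          simp only [id_eq] at hxg
          rw [Finset.mem_erase] at hxg ⊢
          exact ⟨hxg.1, edge_sub he' hxg.2⟩
        have h2 := Finset.card_le_card hsub
        have h3 : ((H.sup id).erase v).card < (H.sup id).card :=
          Finset.card_erase_lt_of_mem hv
        omega
      · exact cycleFree_erase hcf v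

end Final
/-- every β-acyclic CNF formula admits a weakly simplicial elimination
ordering of its variables, i.e., its hypergraph can be reduced to the empty hypergraph
by repeatedly deleting weakly simplicial vertices. -/
theorem betaAcyclic_wsReducible {V : Type} [DecidableEq V] (F : CNF V)
    (h : BetaAcyclic (hypergraphOf F)) :
    WSReducible (hypergraphOf F) := by
  exact cycleFree_ws (((hypergraphOf F).sup id).card) (hypergraphOf F) le_rfl
    (betaAcyclic_cycleFree h)
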